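/- Let π = π_1⋯π_{k+1} ∈ S_{k+1} avoid both 1234 and 3214, and suppose π_5 = k+1 (the maximum is in position 5, k ≥ 4). Then the prefix π_1π_2π_3π_4 avoids both 123 and 321, and moreover either π_1 > π_2, π_3 > π_4, π_3 > π_1, π_4 > π_2, or π_1 < π_2, π_3 < π_4, π_3 < π_1, π_4 < π_2. -/
import Mathlib


/-- Number of inversions of a permutation: pairs `i < j` with `π j < π i`. -/
def invCount {n : ℕ} (π : Equiv.Perm (Fin n)) : ℕ :=
  (Finset.univ.filter (fun p : Fin n × Fin n => p.1 < p.2 ∧ π p.2 < π p.1)).card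

/-- Number of noninversions: pairs `i < j` with `π i < π j`. -/
def nonInvCount {n : ℕ} (π : Equiv.Perm (Fin n)) : ℕ :=
  (Finset.univ.filter (fun p : Fin n × Fin n => p.1 < p.2 ∧ π p.1 < π p.2)).card

/-- `π` contains the pattern `σ`. -/
def Contains {n k : ℕ} (π : Equiv.Perm (Fin n)) (σ : Equiv.Perm (Fin k)) : Prop :=
  ∃ f : Fin k → Fin n, StrictMono f ∧ ∀ s t : Fin k, σ s < σ t ↔ π (f s) < π (f t)

/-- `π` avoids the pattern `σ`. -/
def Avoids {n k : ℕ} (π : Equiv.Perm (Fin n)) (σ : Equiv.Perm (Fin k)) : Prop :=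
  ¬ Contains π σ

/-- `S_n(R)`: permutations of length `n` avoiding every pattern in `R`. -/
def avoidSet (n : ℕ) {k : ℕ} (R : Set (Equiv.Perm (Fin k))) : Set (Equiv.Perm (Fin n)) :=
  {π | ∀ σ ∈ R, Avoids π σ}

/-- A set of permutations is sign-balanced if it has equally many even and odd members. -/
def SignBalanced {n : ℕ} (S : Set (Equiv.Perm (Fin n))) : Prop :=
  {π ∈ S | Even (invCount π)}.ncard = {π ∈ S | ¬ Even (invCount π)}.ncard

/-- The order-reversing permutation `i ↦ n+1-i`. Composing on the right gives the
reversal of a permutation; composing on the left gives its complement. -/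
def revPerm {n : ℕ} : Equiv.Perm (Fin n) :=
  ⟨Fin.rev, Fin.rev, fun i => Fin.rev_rev i, fun i => Fin.rev_rev i⟩

/-- Direct sum `σ ⊕ π` of permutations. -/
def directSum {l m : ℕ} (σ : Equiv.Perm (Fin l)) (π : Equiv.Perm (Fin m)) :
    Equiv.Perm (Fin (l + m)) :=
  finSumFinEquiv.symm.trans ((Equiv.sumCongr σ π).trans finSumFinEquiv)

/-- Skew sum `σ ⊖ π` of permutations. -/
def skewSum {l m : ℕ} (σ : Equiv.Perm (Fin l)) (π : Equiv.Perm (Fin m)) :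
    Equiv.Perm (Fin (l + m)) :=
  finSumFinEquiv.symm.trans ((Equiv.sumCongr σ π).trans
    ((Equiv.sumComm (Fin l) (Fin m)).trans
      (finSumFinEquiv.trans (finCongr (Nat.add_comm m l)))))

noncomputable def p123 : Equiv.Perm (Fin 3) := Equiv.ofBijective ![0,1,2] (by decide)
noncomputable def p132 : Equiv.Perm (Fin 3) := Equiv.ofBijective ![0,2,1] (by decide)
noncomputable def p213 : Equiv.Perm (Fin 3) := Equiv.ofBijective ![1,0,2] (by decide)
noncomputable def p231 : Equiv.Perm (Fin 3) := Equiv.ofBijective ![1,2,0] (by decide)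
noncomputable def p312 : Equiv.Perm (Fin 3) := Equiv.ofBijective ![2,0,1] (by decide)
noncomputable def p321 : Equiv.Perm (Fin 3) := Equiv.ofBijective ![2,1,0] (by decide)

noncomputable def p1234 : Equiv.Perm (Fin 4) := Equiv.ofBijective ![0,1,2,3] (by decide)
noncomputable def p3214 : Equiv.Perm (Fin 4) := Equiv.ofBijective ![2,1,0,3] (by decide)
noncomputable def p1243 : Equiv.Perm (Fin 4) := Equiv.ofBijective ![0,1,3,2] (by decide)
noncomputable def p2143 : Equiv.Perm (Fin 4) := Equiv.ofBijective ![1,0,3,2] (by decide)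
noncomputable def p1423 : Equiv.Perm (Fin 4) := Equiv.ofBijective ![0,3,1,2] (by decide)
noncomputable def p1432 : Equiv.Perm (Fin 4) := Equiv.ofBijective ![0,3,2,1] (by decide)
noncomputable def p1324 : Equiv.Perm (Fin 4) := Equiv.ofBijective ![0,2,1,3] (by decide)
noncomputable def p3412 : Equiv.Perm (Fin 4) := Equiv.ofBijective ![2,3,0,1] (by decide)
noncomputable def p3142 : Equiv.Perm (Fin 4) := Equiv.ofBijective ![2,0,3,1] (by decide)
noncomputable def p2413 : Equiv.Perm (Fin 4) := Equiv.ofBijective ![1,3,0,2] (by decide)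

set_option maxHeartbeats 4000000 in
/-- If `π ∈ S_{k+1}` (`k ≥ 4`) avoids `1234` and `3214` and its maximum is in
position `5` (index `4`), then the prefix `π₁π₂π₃π₄` avoids `123` and `321`,
and either `π₁>π₂, π₃>π₄, π₃>π₁, π₄>π₂` or `π₁<π₂, π₃<π₄, π₃<π₁, π₄<π₂`. -/
theorem stmt_19 (k : ℕ) (hk : 4 ≤ k) (π : Equiv.Perm (Fin (k + 1)))
    (h1 : Avoids π p1234) (h2 : Avoids π p3214)
    (h5 : π ⟨4, by omega⟩ = Fin.last k) :
    (∀ a b c : Fin (k + 1), a < b → b < c → c.val < 4 →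
      ¬ (π a < π b ∧ π b < π c) ∧ ¬ (π c < π b ∧ π b < π a)) ∧
    ((π ⟨1, by omega⟩ < π ⟨0, by omega⟩ ∧ π ⟨3, by omega⟩ < π ⟨2, by omega⟩ ∧
      π ⟨0, by omega⟩ < π ⟨2, by omega⟩ ∧ π ⟨1, by omega⟩ < π ⟨3, by omega⟩) ∨
     (π ⟨0, by omega⟩ < π ⟨1, by omega⟩ ∧ π ⟨2, by omega⟩ < π ⟨3, by omega⟩ ∧
      π ⟨2, by omega⟩ < π ⟨0, by omega⟩ ∧ π ⟨3, by omega⟩ < π ⟨1, by omega⟩)) := by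
  have h4 : (4:ℕ) < k+1 := by omega
  have h5' : π ⟨4, h4⟩ = Fin.last k := h5
  have hmax : ∀ x : Fin (k+1), x ≠ ⟨4, h4⟩ → π x < Fin.last k := by
    intro x hx
    refine lt_of_le_of_ne (Fin.le_last _) ?_
    intro h
    exact hx (π.injective (h.trans h5'.symm))
  have key : ∀ a b c : Fin (k+1), a < b → b < c → c.val < 4 →
      ¬ (π a < π b ∧ π b < π c) ∧ ¬ (π c < π b ∧ π b < π a) := by
    intro a b c hab hbc hc4
    have hc : c < (⟨4, h4⟩ : Fin (k+1)) := by
      rw [Fin.lt_def]; exact hc4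
    have hmono : StrictMono (![a, b, c, ⟨4, h4⟩] : Fin 4 → Fin (k+1)) := by
      have := hab.trans hbc
      have := hbc.trans hc
      have := hab.trans (hbc.trans hc)
      intro s t hst
      fin_cases s <;> fin_cases t <;>
        simp_all <;> first | exact hab | exact hbc | exact hc | assumption
    have ha4 : π a < Fin.last k := hmax a (ne_of_lt (hab.trans (hbc.trans hc)))
    have hb4 : π b < Fin.last k := hmax b (ne_of_lt (hbc.trans hc))
    have hc4' : π c < Fin.last k := hmax c (ne_of_lt hc)
    constructor
    · rintro ⟨hAB, hBC⟩
      apply h1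
      refine ⟨![a, b, c, ⟨4, h4⟩], hmono, ?_⟩
      intro s t
      have hpa : π a < Fin.last k := ha4
      fin_cases s <;> fin_cases t <;>
        first
          | exact iff_of_true (by decide) (by first | exact hAB | exact hBC | exact hAB.trans hBC | exact h5'.symm ▸ ha4 | exact h5'.symm ▸ hb4 | exact h5'.symm ▸ hc4')
          | exact iff_of_false (by decide) (by first | exact lt_irrefl _ | exact asymm hAB | exact asymm hBC | exact asymm (hAB.trans hBC) | exact asymm ha4 | exact asymm hb4 | exact asymm hc4' | exact h5'.symm ▸ not_lt.mpr (Fin.le_last _))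
    · rintro ⟨hCB, hBA⟩
      apply h2
      refine ⟨![a, b, c, ⟨4, h4⟩], hmono, ?_⟩
      intro s t
      fin_cases s <;> fin_cases t <;>
        first
          | exact iff_of_true (by decide) (by first | exact hCB | exact hBA | exact hCB.trans hBA | exact h5'.symm ▸ ha4 | exact h5'.symm ▸ hb4 | exact h5'.symm ▸ hc4')
          | exact iff_of_false (by decide) (by first | exact lt_irrefl _ | exact asymm hCB | exact asymm hBA | exact asymm (hCB.trans hBA) | exact asymm ha4 | exact asymm hb4 | exact asymm hc4' | exact h5'.symm ▸ not_lt.mpr (Fin.le_last _))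
  refine ⟨key, ?_⟩
  have h0 : (0:ℕ) < k+1 := by omega
  have h1' : (1:ℕ) < k+1 := by omega
  have h2' : (2:ℕ) < k+1 := by omega
  have h3' : (3:ℕ) < k+1 := by omega
  have ne : ∀ a b : Fin (k+1), a ≠ b → (π a).val ≠ (π b).val := by
    intro a b hab h
    exact hab (π.injective (Fin.val_injective h))
  have k012 := key ⟨0,h0⟩ ⟨1,h1'⟩ ⟨2,h2'⟩ (by simp [Fin.lt_def]) (by simp [Fin.lt_def]) (by simp)
  have k013 := key ⟨0,h0⟩ ⟨1,h1'⟩ ⟨3,h3'⟩ (by simp [Fin.lt_def]) (by simp [Fin.lt_def]) (by simp)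
  have k023 := key ⟨0,h0⟩ ⟨2,h2'⟩ ⟨3,h3'⟩ (by simp [Fin.lt_def]) (by simp [Fin.lt_def]) (by simp)
  have k123 := key ⟨1,h1'⟩ ⟨2,h2'⟩ ⟨3,h3'⟩ (by simp [Fin.lt_def]) (by simp [Fin.lt_def]) (by simp)
  have n01 := ne ⟨0,h0⟩ ⟨1,h1'⟩ (by simp [Fin.ext_iff])
  have n02 := ne ⟨0,h0⟩ ⟨2,h2'⟩ (by simp [Fin.ext_iff])
  have n03 := ne ⟨0,h0⟩ ⟨3,h3'⟩ (by simp [Fin.ext_iff])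
  have n12 := ne ⟨1,h1'⟩ ⟨2,h2'⟩ (by simp [Fin.ext_iff])
  have n13 := ne ⟨1,h1'⟩ ⟨3,h3'⟩ (by simp [Fin.ext_iff])
  have n23 := ne ⟨2,h2'⟩ ⟨3,h3'⟩ (by simp [Fin.ext_iff])
  show (π ⟨1,h1'⟩ < π ⟨0,h0⟩ ∧ π ⟨3,h3'⟩ < π ⟨2,h2'⟩ ∧
      π ⟨0,h0⟩ < π ⟨2,h2'⟩ ∧ π ⟨1,h1'⟩ < π ⟨3,h3'⟩) ∨
    (π ⟨0,h0⟩ < π ⟨1,h1'⟩ ∧ π ⟨2,h2'⟩ < π ⟨3,h3'⟩ ∧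
      π ⟨2,h2'⟩ < π ⟨0,h0⟩ ∧ π ⟨3,h3'⟩ < π ⟨1,h1'⟩)
  simp only [Fin.lt_def, not_and, not_lt] at k012 k013 k023 k123 ⊢
  obtain ⟨a1,a2⟩ := k012
  obtain ⟨b1,b2⟩ := k013
  obtain ⟨c1,c2⟩ := k023
  obtain ⟨d1,d2⟩ := k123
  rcases n01.lt_or_gt with h01|h01 <;> rcases n23.lt_or_gt with h23|h23 <;>
    rcases n02.lt_or_gt with h02|h02 <;> rcases n13.lt_or_gt with h13|h13 <;>
    rcases n03.lt_or_gt with h03|h03 <;> rcases n12.lt_or_gt with h12|h12 <;>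
    omega
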